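/- Let D be a (super) edge-magic digraph with labeling f, let p be odd, let k = (p+3)/2, and let h : E(D) → S_p^{(p+3)/2} be any function. Let f̂ be the edge-magic labeling of D ⊗_h S_p^{(p+3)/2} induced by f. Then the valence of the complementary labeling of f̂ equals the valence of the labeling of the product induced by the complementary labeling f̄ of f; that is, val(over-line(f̂)) = val(hat(f̄)). -/

import Mathlib

open Finset

/-- `(fv, fa)` is an edge-magic labeling with valence `k` of the digraph with vertex set
`Vs` and arc set `A` (i.e. of its underlying graph): the labels form a bijection from
`V ∪ E` onto `[1, |V| + |E|]` and every arc `(u,v)` satisfies `fv u + fa (u,v) + fv v = k`. -/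
def DIsEdgeMagic {β : Type*} [DecidableEq β] (Vs : Finset β) (A : Finset (β × β))
    (fv : β → ℤ) (fa : β × β → ℤ) (k : ℤ) : Prop :=
  Vs.image fv ∪ A.image fa = Finset.Icc 1 ((Vs.card : ℤ) + (A.card : ℤ)) ∧
  ∀ a ∈ A, fv a.1 + fa a + fv a.2 = k

/-- A super edge-magic labeling of a digraph: edge-magic and the vertex labels are
exactly `[1, |V|]`. -/
def DIsSuperEdgeMagic {β : Type*} [DecidableEq β] (Vs : Finset β) (A : Finset (β × β))
    (fv : β → ℤ) (fa : β × β → ℤ) (k : ℤ) : Prop :=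
  DIsEdgeMagic Vs A fv fa k ∧ Vs.image fv = Finset.Icc 1 (Vs.card : ℤ)

/-- Membership in the family `S_p^k`: a digraph on the vertex set `[1,p] ⊆ ℤ`
(vertices named after their labels), with exactly `p` arcs, whose induced edge sums
are exactly `{k, k+1, …, k+p-1}`. -/
def memSpk (p : ℕ) (k : ℤ) (F : Finset (ℤ × ℤ)) : Prop :=
  (∀ a ∈ F, a.1 ∈ Finset.Icc (1 : ℤ) (p : ℤ) ∧ a.2 ∈ Finset.Icc (1 : ℤ) (p : ℤ)) ∧
  F.card = p ∧
  F.image (fun a => a.1 + a.2) = Finset.Icc k (k + (p : ℤ) - 1)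

/-- The arc set of the product `D ⊗_h Γ`, where `D` has arc set `A` and `h` assigns to
each arc of `D` a digraph on a vertex set contained in `ℤ`:
`((a,i),(b,j))` is an arc iff `(a,b) ∈ A` and `(i,j) ∈ h (a,b)`. -/
def prodArcs {α : Type*} [DecidableEq α] (A : Finset (α × α))
    (h : α × α → Finset (ℤ × ℤ)) : Finset ((α × ℤ) × (α × ℤ)) :=
  A.biUnion fun ab => (h ab).image fun ij => ((ab.1, ij.1), (ab.2, ij.2))

/-- Isomorphism of digraphs given by vertex sets and arc sets. -/
def DigraphIso {β γ : Type*} [DecidableEq β] [DecidableEq γ]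
    (V1 : Finset β) (A1 : Finset (β × β)) (V2 : Finset γ) (A2 : Finset (γ × γ)) : Prop :=
  ∃ φ : β → γ, Set.InjOn φ ↑V1 ∧ V1.image φ = V2 ∧ A1.image (Prod.map φ φ) = A2

/-- Isomorphism of labeled digraphs: a digraph isomorphism preserving all vertex and
arc labels. -/
def LabeledDigraphIso {β γ : Type*} [DecidableEq β] [DecidableEq γ]
    (V1 : Finset β) (A1 : Finset (β × β)) (fv1 : β → ℤ) (fa1 : β × β → ℤ)
    (V2 : Finset γ) (A2 : Finset (γ × γ)) (fv2 : γ → ℤ) (fa2 : γ × γ → ℤ) : Prop :=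
  ∃ φ : β → γ, Set.InjOn φ ↑V1 ∧ V1.image φ = V2 ∧
    A1.image (Prod.map φ φ) = A2 ∧
    (∀ x ∈ V1, fv2 (φ x) = fv1 x) ∧
    (∀ a ∈ A1, fa2 (φ a.1, φ a.2) = fa1 a)

/-- The vertex labels of the labeling of `D ⊗_h S_p^k` induced by a labeling `gv` of the
vertices of `D`: the vertex `(a,i)` receives `p(gv a - 1) + i`. -/
def inducedVert {α : Type*} (p : ℕ) (gv : α → ℤ) : α × ℤ → ℤ :=
  fun x => (p : ℤ) * (gv x.1 - 1) + x.2

/-- The arc labels of the labeling of `D ⊗_h S_p^k` induced by an arc labeling `ga` of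
`D`: the arc `((a,i),(b,j))` receives `p(ga (a,b) - 1) + (k + p) - (i + j)`. -/
def inducedArc {α : Type*} (p : ℕ) (k : ℤ) (ga : α × α → ℤ) :
    (α × ℤ) × (α × ℤ) → ℤ :=
  fun x => (p : ℤ) * (ga (x.1.1, x.2.1) - 1) + (k + (p : ℤ)) - (x.1.2 + x.2.2)


section Aux
variable {α : Type*} [DecidableEq α]

lemma myImageConstSub (a b c : ℤ) :
    (Finset.Icc a b).image (fun x => c - x) = Finset.Icc (c - b) (c - a) := by
  ext x
  simp only [Finset.mem_image, Finset.mem_Icc]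
  constructor
  · rintro ⟨y, hy, rfl⟩; omega
  · intro hx; exact ⟨c - x, by omega, by omega⟩

lemma myBiUnionUnion {β : Type*} [DecidableEq β] (s t : Finset α) (f : α → Finset β) :
    (s ∪ t).biUnion f = s.biUnion f ∪ t.biUnion f := by
  ext x; simp [Finset.mem_biUnion, or_and_right, exists_or]

lemma blocksCover (p n : ℤ) (hp : 1 ≤ p) :
    (Finset.Icc 1 n).biUnion (fun m => Finset.Icc (p * (m - 1) + 1) (p * (m - 1) + p))
      = Finset.Icc 1 (p * n) := by
  ext x
  simp only [Finset.mem_biUnion, Finset.mem_Icc]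
  constructor
  · rintro ⟨m, ⟨h1, h2⟩, h3, h4⟩
    constructor
    · nlinarith
    · nlinarith
  · rintro ⟨h1, h2⟩
    refine ⟨(x - 1) / p + 1, ⟨?_, ?_⟩, ?_, ?_⟩
    · have := Int.ediv_nonneg (by omega : (0:ℤ) ≤ x - 1) (by omega : (0:ℤ) ≤ p)
      omega
    · have hd := Int.mul_ediv_add_emod (x - 1) p
      have hm0 := Int.emod_nonneg (x - 1) (by omega : p ≠ 0)
      have hlt : p * ((x - 1) / p) < p * n := by omega
      have := lt_of_mul_lt_mul_left hlt (by omega : (0:ℤ) ≤ p)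
      omega
    · have hd := Int.mul_ediv_add_emod (x - 1) p
      have hm0 := Int.emod_nonneg (x - 1) (by omega : p ≠ 0)
      have e : p * ((x - 1) / p + 1 - 1) = p * ((x - 1) / p) := by ring
      omega
    · have hd := Int.mul_ediv_add_emod (x - 1) p
      have hml := Int.emod_lt_of_pos (x - 1) (by omega : (0:ℤ) < p)
      have e : p * ((x - 1) / p + 1 - 1) = p * ((x - 1) / p) := by ring
      omega

lemma vertImage (Vs : Finset α) (p : ℕ) (gv : α → ℤ) :
    (Vs ×ˢ Finset.Icc (1:ℤ) (p:ℤ)).image (inducedVert p gv)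
      = Vs.biUnion (fun a => Finset.Icc ((p:ℤ) * (gv a - 1) + 1) ((p:ℤ) * (gv a - 1) + p)) := by
  ext x
  simp only [Finset.mem_image, Finset.mem_product, Finset.mem_biUnion, Finset.mem_Icc,
    inducedVert, Prod.exists]
  constructor
  · rintro ⟨a, i, ⟨ha, h1, h2⟩, rfl⟩
    exact ⟨a, ha, by omega, by omega⟩
  · rintro ⟨a, ha, h1, h2⟩
    exact ⟨a, x - (p:ℤ) * (gv a - 1), ⟨ha, by omega, by omega⟩, by ring⟩

lemma arcImage (A : Finset (α × α)) (p : ℕ) (k : ℤ) (h : α × α → Finset (ℤ × ℤ))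
    (hh : ∀ a ∈ A, (h a).image (fun ij => ij.1 + ij.2) = Finset.Icc k (k + (p:ℤ) - 1))
    (ga : α × α → ℤ) :
    (prodArcs A h).image (inducedArc p k ga)
      = A.biUnion (fun ab => Finset.Icc ((p:ℤ) * (ga ab - 1) + 1) ((p:ℤ) * (ga ab - 1) + p)) := by
  unfold prodArcs
  rw [Finset.biUnion_image]
  apply Finset.biUnion_congr rfl
  intro ab hab
  rw [Finset.image_image]
  have e1 : (inducedArc p k ga ∘ fun ij : ℤ × ℤ => ((ab.1, ij.1), (ab.2, ij.2)))
      = (fun s => ((p:ℤ) * (ga ab - 1) + (k + (p:ℤ))) - s) ∘ (fun ij : ℤ × ℤ => ij.1 + ij.2) := by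
    funext ij
    simp only [Function.comp_apply, inducedArc]
  rw [e1, ← Finset.image_image, hh ab hab, myImageConstSub]
  congr 1 <;> ring

/-- general image statement -/
lemma keyImage (Vs : Finset α) (A : Finset (α × α)) (p : ℕ) (hp : 1 ≤ (p:ℤ)) (k : ℤ)
    (h : α × α → Finset (ℤ × ℤ))
    (hh : ∀ a ∈ A, (h a).image (fun ij => ij.1 + ij.2) = Finset.Icc k (k + (p:ℤ) - 1))
    (gv : α → ℤ) (ga : α × α → ℤ) (n : ℤ)
    (himg : Vs.image gv ∪ A.image ga = Finset.Icc 1 n) :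
    (Vs ×ˢ Finset.Icc (1:ℤ) (p:ℤ)).image (inducedVert p gv)
      ∪ (prodArcs A h).image (inducedArc p k ga) = Finset.Icc 1 ((p:ℤ) * n) := by
  rw [vertImage, arcImage A p k h hh ga]
  have e1 : Vs.biUnion (fun a => Finset.Icc ((p:ℤ) * (gv a - 1) + 1) ((p:ℤ) * (gv a - 1) + p))
      = (Vs.image gv).biUnion (fun m => Finset.Icc ((p:ℤ) * (m - 1) + 1) ((p:ℤ) * (m - 1) + p)) := by
    rw [Finset.image_biUnion]
  have e2 : A.biUnion (fun ab => Finset.Icc ((p:ℤ) * (ga ab - 1) + 1) ((p:ℤ) * (ga ab - 1) + p))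
      = (A.image ga).biUnion (fun m => Finset.Icc ((p:ℤ) * (m - 1) + 1) ((p:ℤ) * (m - 1) + p)) := by
    rw [Finset.image_biUnion]
  rw [e1, e2, ← myBiUnionUnion, himg, blocksCover _ _ hp]

end Aux

/-- Let `D` be an edge-magic digraph with labeling `f`, let `p` be odd, `k = (p+3)/2`, and
`h : E(D) → S_p^{(p+3)/2}`. Then the complementary labeling of the induced labeling `f̂`
of `D ⊗_h S_p^{(p+3)/2}` and the labeling of the product induced by the complementary
labeling `f̄` of `f` are edge-magic with the *same* valence:
`val(overline f̂) = val(hat f̄)`. -/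
theorem stmt8 {α : Type*} [DecidableEq α] (Vs : Finset α) (A : Finset (α × α))
    (hA : ∀ a ∈ A, a.1 ∈ Vs ∧ a.2 ∈ Vs)
    (p : ℕ) (hp : Odd p) (k : ℤ) (hk : 2 * k = (p : ℤ) + 3)
    (h : α × α → Finset (ℤ × ℤ)) (hh : ∀ a ∈ A, memSpk p k (h a))
    (fv : α → ℤ) (fa : α × α → ℤ) (κ : ℤ)
    (hf : DIsEdgeMagic Vs A fv fa κ) :
    ∃ v : ℤ,
      -- the complementary labeling of the induced labeling `f̂` has valence `v`
      DIsEdgeMagic (Vs ×ˢ Finset.Icc (1 : ℤ) (p : ℤ)) (prodArcs A h)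
        (fun x => (p : ℤ) * ((Vs.card : ℤ) + (A.card : ℤ)) + 1 - inducedVert p fv x)
        (fun x => (p : ℤ) * ((Vs.card : ℤ) + (A.card : ℤ)) + 1 - inducedArc p k fa x)
        v ∧
      -- the labeling induced by the complementary labeling `f̄` also has valence `v`
      DIsEdgeMagic (Vs ×ˢ Finset.Icc (1 : ℤ) (p : ℤ)) (prodArcs A h)
        (inducedVert p (fun a => (Vs.card : ℤ) + (A.card : ℤ) + 1 - fv a))
        (inducedArc p k (fun a => (Vs.card : ℤ) + (A.card : ℤ) + 1 - fa a))
        v := by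
  classical
  have hp1 : (1:ℤ) ≤ (p:ℤ) := by
    obtain ⟨m, rfl⟩ := hp; push_cast; omega
  set n : ℤ := (Vs.card : ℤ) + (A.card : ℤ) with hndef
  have hbase := keyImage Vs A p hp1 k h (fun a ha => (hh a ha).2.2) fv fa n hf.1
  have cardIcc : (Finset.Icc (1:ℤ) (p:ℤ)).card = p := by
    rw [Int.card_Icc]; omega
  have cardV : ((Vs ×ˢ Finset.Icc (1:ℤ) (p:ℤ)).card : ℤ) = (p:ℤ) * (Vs.card : ℤ) := by
    rw [Finset.card_product, cardIcc]; push_cast; ring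
  have cardA : ((prodArcs A h).card : ℤ) = (p:ℤ) * (A.card : ℤ) := by
    unfold prodArcs
    rw [Finset.card_biUnion]
    · have : ∀ ab ∈ A, ((h ab).image
          (fun ij : ℤ × ℤ => ((ab.1, ij.1), (ab.2, ij.2)))).card = p := by
        intro ab hab
        rw [Finset.card_image_of_injective _ (by
          intro x y hxy
          simp only [Prod.mk.injEq] at hxy
          exact Prod.ext hxy.1.2 hxy.2.2)]
        exact (hh ab hab).2.1
      rw [Finset.sum_congr rfl this, Finset.sum_const, smul_eq_mul]
      push_cast; ring
    · intro x hx y hy hxy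
      rw [Function.onFun, Finset.disjoint_left]
      rintro z hz1 hz2
      simp only [Finset.mem_image, Prod.mk.injEq, Prod.exists] at hz1 hz2
      obtain ⟨i1, j1, _, rfl⟩ := hz1
      obtain ⟨i2, j2, _, heq⟩ := hz2
      simp only [Prod.mk.injEq] at heq
      exact hxy (Prod.ext heq.1.1.symm heq.2.1.symm)
  have hN : ((Vs ×ˢ Finset.Icc (1:ℤ) (p:ℤ)).card : ℤ) + ((prodArcs A h).card : ℤ)
      = (p:ℤ) * n := by rw [cardV, cardA, hndef]; ring
  refine ⟨3 * (p:ℤ) * n + (p:ℤ) - (p:ℤ) * κ + k, ⟨?_, ?_⟩, ⟨?_, ?_⟩⟩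
  · -- image condition for the complementary labeling of f̂
    rw [hN]
    have e1 : (fun x => (p:ℤ) * n + 1 - inducedVert p fv x)
        = (fun y => (p:ℤ) * n + 1 - y) ∘ inducedVert p fv := rfl
    have e2 : (fun x => (p:ℤ) * n + 1 - inducedArc p k fa x)
        = (fun y => (p:ℤ) * n + 1 - y) ∘ inducedArc p k fa := rfl
    rw [e1, e2, ← Finset.image_image, ← Finset.image_image (g := fun y => (p:ℤ) * n + 1 - y),
      ← Finset.image_union, hbase, myImageConstSub]
    congr 1 <;> ring
  · -- magic condition for the complementary labeling of f̂
    intro x hx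
    unfold prodArcs at hx
    simp only [Finset.mem_biUnion, Finset.mem_image, Prod.exists] at hx
    obtain ⟨a, b, hab, i, j, hij, rfl⟩ := hx
    have hm := hf.2 (a, b) hab
    simp only [inducedVert, inducedArc]
    linear_combination (-(p:ℤ)) * hm - hk
  · -- image condition for the labeling induced by f̄
    rw [hN]
    have himg' : Vs.image (fun a => n + 1 - fv a) ∪ A.image (fun a => n + 1 - fa a)
        = Finset.Icc 1 n := by
      have e1 : (fun a => n + 1 - fv a) = (fun y => n + 1 - y) ∘ fv := rfl
      have e2 : (fun a => n + 1 - fa a) = (fun y => n + 1 - y) ∘ fa := rfl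
      rw [e1, e2, ← Finset.image_image, ← Finset.image_image (g := fun y => n + 1 - y),
        ← Finset.image_union, hf.1, myImageConstSub]
      congr 1 <;> ring
    exact keyImage Vs A p hp1 k h (fun a ha => (hh a ha).2.2) _ _ n himg'
  · -- magic condition for the labeling induced by f̄
    intro x hx
    unfold prodArcs at hx
    simp only [Finset.mem_biUnion, Finset.mem_image, Prod.exists] at hx
    obtain ⟨a, b, hab, i, j, hij, rfl⟩ := hx
    have hm := hf.2 (a, b) hab
    simp only [inducedVert, inducedArc]
    linear_combination (-(p:ℤ)) * hm
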